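/- The number of north-east lattice paths from (a,b) to (c,d) staying weakly above the diagonal x = y and having exactly ℓ corners equals C(d−b, ℓ)·C(c−a, ℓ) − C(d−a−1, ℓ−1)·C(c−b+1, ℓ+1), assuming b ≥ a and d ≥ c. -/

import Mathlib

/-- A north-east unit step in the integer lattice. -/
def NEStep (p q : ℤ × ℤ) : Prop :=
  q = (p.1 + 1, p.2) ∨ q = (p.1, p.2 + 1)

/-- A north-east lattice path from `a` to `b` staying weakly above the diagonal `x = y`,
represented as its (nonempty) list of lattice points. -/
def IsNEPathAbove (a b : ℤ × ℤ) (l : List (ℤ × ℤ)) : Prop :=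
  l.head? = some a ∧ l.getLast? = some b ∧ l.Chain' NEStep ∧ ∀ p ∈ l, p.1 ≤ p.2

/-- The number of north-east lattice paths from `a` to `b` weakly above the diagonal. -/
noncomputable def latticeCount (a b : ℤ × ℤ) : ℕ :=
  Set.ncard {l : List (ℤ × ℤ) | IsNEPathAbove a b l}

/-- The binomial coefficient `C(n, k)` for integers, equal to `0` if `k < 0` or `k > n`. -/
def intChoose (n k : ℤ) : ℕ :=
  if 0 ≤ k ∧ k ≤ n then n.toNat.choose k.toNat else 0

/-- The number of corners (an east step immediately followed by a north step)
of a north-east lattice path. -/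
noncomputable def cornerCount (l : List (ℤ × ℤ)) : ℕ :=
  Set.ncard {p : ℤ × ℤ | [p, (p.1 + 1, p.2), (p.1 + 1, p.2 + 1)] <:+: l}

/-- Krattenthaler's corner-counting formula: the number of north-east lattice paths
from `(a,b)` to `(c,d)` weakly above the diagonal `x = y` with exactly `ℓ` corners is
`C(d−b, ℓ)·C(c−a, ℓ) − C(d−a−1, ℓ−1)·C(c−b+1, ℓ+1)`, assuming `b ≥ a` and `d ≥ c`. -/
def icc (n k : ℤ) : ℤ := (intChoose n k : ℤ)

lemma icc_zero {n k : ℤ} (h : n < k ∨ k < 0) : icc n k = 0 := by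
  unfold icc intChoose
  split_ifs with h' <;> simp <;> omega

lemma icc_pascal {n : ℤ} (k : ℤ) (h : 1 ≤ n) :
    icc n k = icc (n-1) k + icc (n-1) (k-1) := by
  unfold icc intChoose
  by_cases hk : 0 ≤ k
  · rcases eq_or_lt_of_le hk with hk0 | hk1
    · subst_eqs
      split_ifs <;> simp_all <;> omega
    · have h1 : k.toNat = (k-1).toNat + 1 := by omega
      have h2 : n.toNat = (n-1).toNat + 1 := by omega
      by_cases hkn : k ≤ n - 1
      · rw [if_pos ⟨hk, by omega⟩, if_pos ⟨hk, hkn⟩, if_pos ⟨by omega, by omega⟩]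
        rw [h1, h2, Nat.choose_succ_succ]
        push_cast; ring
      · by_cases hkn2 : k ≤ n
        · rw [if_pos ⟨hk, hkn2⟩, if_neg (by omega), if_pos ⟨by omega, by omega⟩]
          have e1 : k.toNat = n.toNat := by omega
          have e2 : (k-1).toNat = (n-1).toNat := by omega
          rw [e1, e2, Nat.choose_self, Nat.choose_self]
          simp
        · rw [if_neg (by omega), if_neg (by omega), if_neg (by omega)]
          simp
  · rw [if_neg (by omega), if_neg (by omega), if_neg (by omega)]; simp

def cT (a b c d k : ℤ) : ℤ :=
  icc (d-b) k * icc (c-a) k - icc (d-a-1) (k-1) * icc (c-b+1) (k+1)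

lemma cT_zero_of_lt_a {a b c d k : ℤ} (hab : a ≤ b) (hk : 0 ≤ k) (hca : c < a) :
    cT a b c d k = 0 := by
  have e1 : icc (c-a) k = 0 := icc_zero (Or.inl (by omega))
  have e2 : icc (c-b+1) (k+1) = 0 := icc_zero (Or.inl (by omega))
  unfold cT; rw [e1, e2]; ring

lemma cT_zero_of_lt_b {a b c d k : ℤ} (hcd : c ≤ d) (hk : 0 ≤ k) (hdb : d < b) :
    cT a b c d k = 0 := by
  have e1 : icc (d-b) k = 0 := icc_zero (Or.inl (by omega))
  have e2 : icc (c-b+1) (k+1) = 0 := icc_zero (Or.inl (by omega))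
  unfold cT; rw [e1, e2]; ring

lemma cF_hat {a b c d k : ℤ} (hk : 0 ≤ k) (hdb : b < d) :
    cT a b c d k - cT a (b+1) c d k
      = icc (d-b-1) (k-1) * icc (c-a) k - icc (d-a-1) (k-1) * icc (c-b) k := by
  unfold cT
  have h1 : icc (d-b) k = icc (d-b-1) k + icc (d-b-1) (k-1) := icc_pascal k (by omega)
  have h2 : icc (c-b+1) (k+1) = icc (c-b) (k+1) + icc (c-b) k := by
    by_cases hcb : b ≤ c
    · have h := icc_pascal (n := c-b+1) (k+1) (by omega)
      have e1 : c - b + 1 - 1 = c - b := by ring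
      have e2 : k + 1 - 1 = k := by ring
      rw [e1, e2] at h
      exact h
    · have e1 : icc (c-b+1) (k+1) = 0 := icc_zero (Or.inl (by omega))
      have e2 : icc (c-b) (k+1) = 0 := icc_zero (Or.inl (by omega))
      have e3 : icc (c-b) k = 0 := icc_zero (Or.inl (by omega))
      rw [e1, e2, e3]; ring
  have h3 : d - (b+1) = d - b - 1 := by ring
  have h4 : c - (b+1) + 1 = c - b := by ring
  rw [h1, h2, h3, h4]
  ring

lemma cT_zero_a {a b c d k : ℤ} (hab : a ≤ b) (hca : c < a) : cT a b c d k = 0 := by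
  rcases le_or_gt 0 k with hk | hk
  · exact cT_zero_of_lt_a hab hk hca
  · have e1 : icc (d-b) k = 0 := icc_zero (Or.inr hk)
    have e2 : icc (d-a-1) (k-1) = 0 := icc_zero (Or.inr (by omega))
    unfold cT; rw [e1, e2]; ring

lemma cT_zero_b {a b c d k : ℤ} (hcd : c ≤ d) (hdb : d < b) : cT a b c d k = 0 := by
  rcases le_or_gt 0 k with hk | hk
  · exact cT_zero_of_lt_b hcd hk hdb
  · have e1 : icc (d-b) k = 0 := icc_zero (Or.inr hk)
    have e2 : icc (d-a-1) (k-1) = 0 := icc_zero (Or.inr (by omega))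
    unfold cT; rw [e1, e2]; ring

/-- value at the trivial endpoint -/
lemma cT_triv {a b k : ℤ} (hab : a ≤ b) (hk : 0 ≤ k) :
    cT a b a b k = if k = 0 then 1 else 0 := by
  have e2 : icc (b-a-1) (k-1) * icc (a-b+1) (k+1) = 0 := by
    rcases eq_or_lt_of_le hk with h0 | h1
    · have : icc (b-a-1) (k-1) = 0 := icc_zero (Or.inr (by omega))
      rw [this]; ring
    · have : icc (a-b+1) (k+1) = 0 := icc_zero (Or.inl (by omega))
      rw [this]; ring
  unfold cT
  rw [show b - b = 0 from by ring, show a - a = 0 from by ring, e2]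
  split_ifs with h
  · subst h; unfold icc intChoose; norm_num
  · have : icc 0 k = 0 := icc_zero (Or.inl (by omega))
    rw [this]; ring

/-- I1 : the a = b case of the F-recursion -/
lemma cF_diag {a c d k : ℤ} (hcd : c ≤ d) (hne : ¬(c = a ∧ d = a)) (hk : 0 ≤ k) :
    cT a a c d k - cT a (a+1) c d k = 0 := by
  rcases lt_trichotomy a d with h | h | h
  · have h1 := cF_hat (a := a) (b := a) (c := c) (d := d) hk h
    rw [h1]
    rw [show d - a - 1 = d - a - 1 from rfl]; ring_nf
  · have hca : c < a := by omega
    rw [cT_zero_a le_rfl hca, cT_zero_b hcd (by omega)]; ring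
  · rw [cT_zero_b hcd (by omega), cT_zero_b hcd (by omega)]; ring

/-- I2 : the a < b case of the F-recursion -/
lemma cF_rec {a b c d k : ℤ} (hab : a < b) (hcd : c ≤ d) (hne : ¬(c = a ∧ d = b)) (hk : 0 ≤ k) :
    cT a b c d k - cT a (b+1) c d k
      = cT (a+1) (b+1) c d (k-1) + (cT (a+1) b c d k - cT (a+1) (b+1) c d k) := by
  rcases lt_trichotomy b d with hbd | hbd | hbd
  · -- d > b
    rw [cF_hat hk hbd, cF_hat (a := a+1) hk hbd]
    have hTform : cT (a+1) (b+1) c d (k-1)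
        = icc (d-b-1) (k-1) * icc (c-a-1) (k-1) - icc (d-a-2) (k-2) * icc (c-b) k := by
      unfold cT
      rw [show d-(b+1) = d-b-1 from by ring, show c-(a+1) = c-a-1 from by ring,
        show d-(a+1)-1 = d-a-2 from by ring, show c-(b+1)+1 = c-b from by ring,
        show k-1-1 = k-2 from by ring, show k-1+1 = k from by ring]
    rw [hTform, show c-(a+1) = c-a-1 from by ring, show d-(a+1)-1 = d-a-2 from by ring]
    rcases lt_trichotomy a c with hac | hac | hac
    · have p1 : icc (c-a) k = icc (c-a-1) k + icc (c-a-1) (k-1) := by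
        have h := icc_pascal (n := c-a) k (by omega)
        rw [show c-a-1 = c-a-1 from rfl] at h; exact h
      have p2 : icc (d-a-1) (k-1) = icc (d-a-2) (k-1) + icc (d-a-2) (k-2) := by
        have h := icc_pascal (n := d-a-1) (k-1) (by omega)
        rw [show d-a-1-1 = d-a-2 from by ring, show k-1-1 = k-2 from by ring] at h; exact h
      rw [p1, p2]; ring
    · -- c = a
      have e2 : icc (c-b) k = 0 := icc_zero (by omega)
      have e3 : icc (c-a-1) k = 0 := icc_zero (by omega)
      have e4 : icc (c-a-1) (k-1) = 0 := icc_zero (by omega)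
      have e5 : icc (d-b-1) (k-1) * icc (c-a) k = 0 := by
        rcases eq_or_lt_of_le hk with hk0 | hk1
        · have e : icc (d-b-1) (k-1) = 0 := icc_zero (Or.inr (by omega))
          rw [e]; ring
        · have e : icc (c-a) k = 0 := icc_zero (Or.inl (by omega))
          rw [e]; ring
      rw [e2, e3, e4]
      linear_combination e5
    · -- c < a
      have e1 : icc (c-a) k = 0 := icc_zero (Or.inl (by omega))
      have e2 : icc (c-b) k = 0 := icc_zero (Or.inl (by omega))
      have e3 : icc (c-a-1) k = 0 := icc_zero (Or.inl (by omega))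
      have e4 : icc (c-a-1) (k-1) = 0 := by
        rcases eq_or_lt_of_le hk with hk0 | hk1
        · exact icc_zero (Or.inr (by omega))
        · exact icc_zero (Or.inl (by omega))
      rw [e1, e2, e3, e4]; ring
  · -- d = b
    have hca : c ≠ a := fun h => hne ⟨h, by omega⟩
    have key : ∀ x : ℤ, cT x b c d k = if k = 0 ∧ x ≤ c then 1 else 0 := by
      intro x
      unfold cT
      have h0 : d - b = 0 := by omega
      have e2 : icc (d-x-1) (k-1) * icc (c-b+1) (k+1) = 0 := by
        rcases lt_trichotomy c d with h | h | h
        · have e : icc (c-b+1) (k+1) = 0 := icc_zero (Or.inl (by omega))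
          rw [e]; ring
        · rcases eq_or_lt_of_le hk with hk0 | hk1
          · have e : icc (d-x-1) (k-1) = 0 := icc_zero (Or.inr (by omega))
            rw [e]; ring
          · have e : icc (c-b+1) (k+1) = 0 := icc_zero (Or.inl (by omega))
            rw [e]; ring
        · omega
      rw [h0]
      rcases eq_or_lt_of_le hk with hk0 | hk1
      · have hk0' : k = 0 := hk0.symm
        subst hk0'
        have i00 : icc 0 (0:ℤ) = 1 := by unfold icc intChoose; norm_num
        rw [i00]
        by_cases hxc : x ≤ c
        · have e : icc (c-x) 0 = 1 := by
            unfold icc intChoose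
            rw [if_pos ⟨le_rfl, by omega⟩]
            simp
          rw [e, if_pos (show (0:ℤ) = 0 ∧ x ≤ c from ⟨rfl, hxc⟩)]
          linear_combination -e2
        · have e : icc (c-x) 0 = 0 := icc_zero (Or.inl (by omega))
          rw [e, if_neg (show ¬((0:ℤ) = 0 ∧ x ≤ c) from by omega)]
          linear_combination -e2
      · have e : icc 0 k = 0 := icc_zero (Or.inl (by omega))
        rw [e, if_neg (show ¬(k = 0 ∧ x ≤ c) from by omega)]
        linear_combination -e2
    have z1 : cT a (b+1) c d k = 0 := cT_zero_b hcd (by omega)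
    have z2 : cT (a+1) (b+1) c d (k-1) = 0 := cT_zero_b hcd (by omega)
    have z3 : cT (a+1) (b+1) c d k = 0 := cT_zero_b hcd (by omega)
    rw [z1, z2, z3, key a, key (a+1)]
    have hiff : (k = 0 ∧ a ≤ c) ↔ (k = 0 ∧ a + 1 ≤ c) := by
      constructor
      · rintro ⟨h1, h2⟩; exact ⟨h1, by omega⟩
      · rintro ⟨h1, h2⟩; exact ⟨h1, by omega⟩
    simp only [hiff]; ring
  · -- d < b
    rw [cT_zero_b hcd hbd, cT_zero_b hcd (by omega), cT_zero_b hcd (by omega),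
      cT_zero_b hcd (by omega), cT_zero_b hcd (by omega)]
    ring

lemma neStep_coords {p q : ℤ × ℤ} (h : NEStep p q) :
    p.1 ≤ q.1 ∧ p.2 ≤ q.2 ∧ q.1 + q.2 = p.1 + p.2 + 1 := by
  rcases h with h | h <;> subst h <;> constructor <;> simp <;> omega

lemma chain_mono {l : List (ℤ × ℤ)} (hc : l.Chain' NEStep) {p q : ℤ × ℤ}
    (hp : l.head? = some p) (hq : q ∈ l) : p.1 ≤ q.1 ∧ p.2 ≤ q.2 := by
  induction l generalizing p with
  | nil => simp at hq
  | cons x t ih =>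
    simp only [List.head?_cons, Option.some.injEq] at hp
    subst hp
    rcases List.mem_cons.mp hq with rfl | hq'
    · exact ⟨le_rfl, le_rfl⟩
    · cases t with
      | nil => simp at hq'
      | cons y t' =>
        unfold List.Chain' at hc; rw [List.isChain_cons_cons] at hc
        have h1 := ih hc.2 rfl hq'
        have h2 := neStep_coords hc.1
        exact ⟨le_trans h2.1 h1.1, le_trans h2.2.1 h1.2⟩

lemma chain_sum {l : List (ℤ × ℤ)} (hc : l.Chain' NEStep) {p q : ℤ × ℤ}
    (hp : l.head? = some p) (hq : l.getLast? = some q) :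
    q.1 + q.2 + 1 = p.1 + p.2 + l.length := by
  induction l generalizing p with
  | nil => simp at hp
  | cons x t ih =>
    simp only [List.head?_cons, Option.some.injEq] at hp
    subst hp
    cases t with
    | nil =>
      simp only [List.getLast?_singleton, Option.some.injEq] at hq
      subst hq; simp
    | cons y t' =>
      rw [List.getLast?_cons_cons] at hq
      unfold List.Chain' at hc; rw [List.isChain_cons_cons] at hc
      have h1 := ih hc.2 rfl hq
      have h2 := (neStep_coords hc.1).2.2
      simp only [List.length_cons] at h1 ⊢
      push_cast at h1 ⊢
      omega

lemma path_length {a b c d : ℤ} {l : List (ℤ × ℤ)} (h : IsNEPathAbove (a, b) (c, d) l) :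
    (l.length : ℤ) = c + d - a - b + 1 := by
  obtain ⟨h1, h2, h3, _⟩ := h
  have := chain_sum h3 h1 h2
  simp at this
  omega

/-- The set of corners of a list. -/
def cornerSet (l : List (ℤ × ℤ)) : Set (ℤ × ℤ) :=
  {p | [p, (p.1 + 1, p.2), (p.1 + 1, p.2 + 1)] <:+: l}

lemma cornerCount_eq (l : List (ℤ × ℤ)) : cornerCount l = (cornerSet l).ncard := rfl

lemma cornerSet_subset (l : List (ℤ × ℤ)) : cornerSet l ⊆ {p | p ∈ l} :=
  fun p hp => hp.subset (List.mem_cons_self)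

lemma cornerSet_finite (l : List (ℤ × ℤ)) : (cornerSet l).Finite :=
  l.finite_toSet.subset (cornerSet_subset l)

lemma cornerCount_singleton (x : ℤ × ℤ) : cornerCount [x] = 0 := by
  have h : cornerSet [x] = ∅ := by
    ext p
    simp only [Set.mem_empty_iff_false, iff_false, cornerSet, Set.mem_setOf_eq]
    intro h
    have := h.sublist.length_le
    simp at this
  rw [cornerCount_eq, h, Set.ncard_empty]

lemma prefix_two {q r : ℤ × ℤ} {t : List (ℤ × ℤ)} (h : [q, r] <+: t) :
    t.head? = some q ∧ t.tail.head? = some r := by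
  obtain ⟨s, rfl⟩ := h
  simp

lemma cornerSet_cons (x : ℤ × ℤ) (t : List (ℤ × ℤ)) :
    cornerSet (x :: t) = cornerSet t ∪
      {p | p = x ∧ t.head? = some (x.1 + 1, x.2) ∧ t.tail.head? = some (x.1 + 1, x.2 + 1)} := by
  ext p
  simp only [cornerSet, Set.mem_union, Set.mem_setOf_eq]
  rw [List.infix_cons_iff]
  constructor
  · rintro (hpre | hinf)
    · rw [List.cons_prefix_cons] at hpre
      obtain ⟨rfl, h2⟩ := hpre
      have h3 := prefix_two h2
      exact Or.inr ⟨rfl, h3.1, h3.2⟩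
    · exact Or.inl hinf
  · rintro (hinf | ⟨rfl, h1, h2⟩)
    · exact Or.inr hinf
    · left
      cases t with
      | nil => simp at h1
      | cons y t' =>
        simp only [List.head?_cons, Option.some.injEq] at h1
        subst h1
        cases t' with
        | nil => simp at h2
        | cons z t'' =>
          simp only [List.tail_cons, List.head?_cons, Option.some.injEq] at h2
          subst h2
          rw [List.cons_prefix_cons]
          exact ⟨rfl, List.cons_prefix_cons.mpr ⟨rfl, List.cons_prefix_cons.mpr ⟨rfl, List.nil_prefix⟩⟩⟩

lemma cornerCount_cons_N {a b : ℤ} {t : List (ℤ × ℤ)}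
    (ht : t.head? = some (a, b + 1)) :
    cornerCount (((a, b) : ℤ × ℤ) :: t) = cornerCount t := by
  rw [cornerCount_eq, cornerCount_eq, cornerSet_cons]
  have h : {p : ℤ × ℤ | p = (a, b) ∧ t.head? = some ((a, b).1 + 1, (a, b).2) ∧
      t.tail.head? = some ((a, b).1 + 1, (a, b).2 + 1)} = ∅ := by
    ext p
    simp only [Set.mem_empty_iff_false, iff_false, Set.mem_setOf_eq, not_and]
    rintro rfl h1
    rw [ht] at h1
    simp at h1
  rw [h, Set.union_empty]

lemma cornerCount_cons_E {a b : ℤ} {t : List (ℤ × ℤ)} (hct : t.Chain' NEStep)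
    (ht : t.head? = some (a + 1, b)) :
    cornerCount (((a, b) : ℤ × ℤ) :: t)
      = cornerCount t + (if t.tail.head? = some (a + 1, b + 1) then 1 else 0) := by
  have hnm : ((a, b) : ℤ × ℤ) ∉ cornerSet t := by
    intro hmem
    have h1 := cornerSet_subset t hmem
    have h2 := (chain_mono hct ht h1).1
    simp at h2
  rw [cornerCount_eq, cornerCount_eq, cornerSet_cons]
  by_cases hcond : t.tail.head? = some (a + 1, b + 1)
  · have h : {p : ℤ × ℤ | p = (a, b) ∧ t.head? = some ((a, b).1 + 1, (a, b).2) ∧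
        t.tail.head? = some ((a, b).1 + 1, (a, b).2 + 1)} = {((a, b) : ℤ × ℤ)} := by
      ext p
      simp only [Set.mem_setOf_eq, Set.mem_singleton_iff]
      constructor
      · rintro ⟨rfl, _, _⟩; rfl
      · rintro rfl; exact ⟨rfl, ht, hcond⟩
    rw [h, Set.union_singleton, Set.ncard_insert_of_notMem hnm (cornerSet_finite t),
      if_pos hcond]
  · have h : {p : ℤ × ℤ | p = (a, b) ∧ t.head? = some ((a, b).1 + 1, (a, b).2) ∧
        t.tail.head? = some ((a, b).1 + 1, (a, b).2 + 1)} = ∅ := by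
      ext p
      simp only [Set.mem_empty_iff_false, iff_false, Set.mem_setOf_eq, not_and]
      rintro rfl _
      exact hcond
    rw [h, Set.union_empty, if_neg hcond]
    rfl

lemma getLast?_cons_of_ne {x : ℤ × ℤ} {t : List (ℤ × ℤ)} (h : t ≠ []) :
    (x :: t).getLast? = t.getLast? := by
  cases t with
  | nil => exact absurd rfl h
  | cons y t' => rw [List.getLast?_cons_cons]

def Tset (a b c d : ℤ) (ℓ : ℕ) : Set (List (ℤ × ℤ)) :=
  {l | IsNEPathAbove (a, b) (c, d) l ∧ cornerCount l = ℓ}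

def Fset (a b c d : ℤ) (ℓ : ℕ) : Set (List (ℤ × ℤ)) :=
  {l ∈ Tset a b c d ℓ | l.tail.head? ≠ some (a, b + 1)}

def Nset (a b c d : ℤ) (ℓ : ℕ) : Set (List (ℤ × ℤ)) :=
  {l ∈ Tset a b c d ℓ | l.tail.head? = some (a, b + 1)}

lemma Tset_eq_union (a b c d : ℤ) (ℓ : ℕ) :
    Tset a b c d ℓ = Fset a b c d ℓ ∪ Nset a b c d ℓ := by
  ext l
  simp only [Fset, Nset, Set.mem_union, Set.mem_setOf_eq]
  tauto

lemma FN_disjoint (a b c d : ℤ) (ℓ : ℕ) : Disjoint (Fset a b c d ℓ) (Nset a b c d ℓ) := by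
  rw [Set.disjoint_left]
  rintro l ⟨_, h1⟩ ⟨_, h2⟩
  exact h1 h2

lemma Fset_subset (a b c d : ℤ) (ℓ : ℕ) : Fset a b c d ℓ ⊆ Tset a b c d ℓ :=
  fun _ h => h.1

lemma Nset_subset (a b c d : ℤ) (ℓ : ℕ) : Nset a b c d ℓ ⊆ Tset a b c d ℓ :=
  fun _ h => h.1

/-- digression: a path in Tset is nonempty with head (a,b) -/
lemma Tset_shape {a b c d : ℤ} {ℓ : ℕ} {l : List (ℤ × ℤ)} (h : l ∈ Tset a b c d ℓ) :
    ∃ t, l = (a, b) :: t := by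
  obtain ⟨⟨h1, _, _, _⟩, _⟩ := h
  cases l with
  | nil => simp at h1
  | cons x t =>
    simp only [List.head?_cons, Option.some.injEq] at h1
    exact ⟨t, by rw [h1]⟩

/-- the N-step bijection -/
lemma Nset_eq {a b c d : ℤ} {ℓ : ℕ} (hab : a ≤ b) :
    Nset a b c d ℓ = (fun t => ((a : ℤ), (b : ℤ)) :: t) '' Tset a (b + 1) c d ℓ := by
  ext l
  constructor
  · intro hl
    obtain ⟨t, rfl⟩ := Tset_shape hl.1
    obtain ⟨⟨⟨h1, h2, h3, h4⟩, h5⟩, h6⟩ := hl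
    simp only [List.tail_cons] at h6
    have htne : t ≠ [] := by
      intro h; rw [h] at h6; simp at h6
    refine ⟨t, ⟨⟨h6, ?_, h3.tail, ?_⟩, ?_⟩, rfl⟩
    · rw [getLast?_cons_of_ne htne] at h2; exact h2
    · exact fun p hp => h4 p (List.mem_cons_of_mem _ hp)
    · rw [cornerCount_cons_N h6] at h5; exact h5
  · rintro ⟨t, ⟨⟨h1, h2, h3, h4⟩, h5⟩, rfl⟩
    have htne : t ≠ [] := by
      intro h; rw [h] at h1; simp at h1
    refine ⟨⟨⟨rfl, ?_, ?_, ?_⟩, ?_⟩, ?_⟩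
    · rw [getLast?_cons_of_ne htne]; exact h2
    · unfold List.Chain'; rw [List.isChain_cons]
      refine ⟨fun y hy => ?_, h3⟩
      rw [h1] at hy
      simp only [Option.mem_def, Option.some.injEq] at hy
      subst hy
      exact Or.inr rfl
    · intro p hp
      rcases List.mem_cons.mp hp with rfl | hp'
      · exact hab
      · exact h4 p hp'
    · rw [cornerCount_cons_N h1]; exact h5
    · simpa using h1

/-- the E-step decomposition of Fset -/
lemma Fset_eq_step {a b c d : ℤ} {ℓ : ℕ} (hab : a < b) (hne : ¬(a = c ∧ b = d)) :
    Fset a b c d ℓ = (fun t => ((a : ℤ), (b : ℤ)) :: t) ''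
      ((if ℓ = 0 then ∅ else Nset (a + 1) b c d (ℓ - 1)) ∪ Fset (a + 1) b c d ℓ) := by
  ext l
  constructor
  · intro hl
    obtain ⟨t, rfl⟩ := Tset_shape hl.1
    obtain ⟨⟨⟨h1, h2, h3, h4⟩, h5⟩, h6⟩ := hl
    simp only [List.tail_cons] at h6
    cases t with
    | nil =>
      exfalso
      simp only [List.getLast?_singleton, Option.some.injEq, Prod.mk.injEq] at h2
      exact hne ⟨h2.1, h2.2⟩
    | cons y t' =>
      have hstep : NEStep (a, b) y := (List.isChain_cons_cons.mp h3).1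
      have hyE : y = ((a : ℤ) + 1, (b : ℤ)) := by
        rcases hstep with h | h
        · exact h
        · exfalso; apply h6; rw [h]; rfl
      subst hyE
      have hcc := cornerCount_cons_E (a := a) (b := b) h3.tail (t := ((a+1 : ℤ), (b : ℤ)) :: t') rfl
      rw [h5] at hcc
      have htT : ∀ m : ℕ, cornerCount ((a+1, b) :: t') = m →
          ((a+1, b) :: t') ∈ Tset (a + 1) b c d m := by
        intro m hm
        refine ⟨⟨rfl, ?_, h3.tail, fun p hp => h4 p (List.mem_cons_of_mem _ hp)⟩, hm⟩
        rw [getLast?_cons_of_ne (by simp)] at h2; exact h2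
      by_cases hcond : (((a:ℤ)+1, b) :: t').tail.head? = some (a + 1, b + 1)
      · rw [if_pos hcond] at hcc
        have hl1 : 1 ≤ ℓ := by omega
        refine ⟨(a+1, b) :: t', Or.inl ?_, rfl⟩
        rw [if_neg (by omega)]
        exact ⟨htT (ℓ - 1) (by omega), hcond⟩
      · rw [if_neg hcond] at hcc
        exact ⟨(a+1, b) :: t', Or.inr ⟨htT ℓ (by omega), hcond⟩, rfl⟩
  · rintro ⟨t, ht, rfl⟩
    have key : ∀ m : ℕ, t ∈ Tset (a + 1) b c d m →
        ((a, b) :: t).getLast? = some (c, d) ∧ List.Chain' NEStep ((a, b) :: t) ∧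
        (∀ p ∈ (a, b) :: t, p.1 ≤ p.2) ∧ t.head? = some (a + 1, b) := by
      rintro m ⟨⟨h1, h2, h3, h4⟩, h5⟩
      have htne : t ≠ [] := by
        intro h; rw [h] at h1; simp at h1
      refine ⟨?_, ?_, ?_, h1⟩
      · rw [getLast?_cons_of_ne htne]; exact h2
      · unfold List.Chain'; rw [List.isChain_cons]
        refine ⟨fun y hy => ?_, h3⟩
        rw [h1] at hy
        simp only [Option.mem_def, Option.some.injEq] at hy
        subst hy
        exact Or.inl rfl
      · intro p hp
        rcases List.mem_cons.mp hp with rfl | hp'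
        · exact le_of_lt hab
        · exact h4 p hp'
    rcases ht with htN | htF
    · by_cases h0 : ℓ = 0
      · rw [if_pos h0] at htN; simp at htN
      · rw [if_neg h0] at htN
        obtain ⟨htT, hcond⟩ := htN
        obtain ⟨k1, k2, k3, k4⟩ := key (ℓ - 1) htT
        refine ⟨⟨⟨rfl, k1, k2, k3⟩, ?_⟩, ?_⟩
        · rw [cornerCount_cons_E (htT.1.2.2.1) k4, if_pos hcond, htT.2]
          omega
        · simp only [List.tail_cons]
          rw [k4]
          simp only [ne_eq, Option.some.injEq, Prod.mk.injEq, not_and]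
          intro h; omega
    · obtain ⟨htT, hcond⟩ := htF
      obtain ⟨k1, k2, k3, k4⟩ := key ℓ htT
      refine ⟨⟨⟨rfl, k1, k2, k3⟩, ?_⟩, ?_⟩
      · rw [cornerCount_cons_E (htT.1.2.2.1) k4, if_neg hcond, htT.2]
        omega
      · simp only [List.tail_cons]
        rw [k4]
        simp only [ne_eq, Option.some.injEq, Prod.mk.injEq, not_and]
        intro h; omega

lemma Tset_triv {a b : ℤ} {ℓ : ℕ} (hab : a ≤ b) :
    Tset a b a b ℓ = if ℓ = 0 then ({[((a : ℤ), (b : ℤ))]} : Set (List (ℤ × ℤ))) else ∅ := by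
  ext l
  constructor
  · rintro ⟨hP, hcc⟩
    have hlen := path_length hP
    obtain ⟨h1, h2, h3, h4⟩ := hP
    have hl1 : l.length = 1 := by omega
    cases l with
    | nil => simp at hl1
    | cons x t =>
      have ht : t = [] := by
        simp only [List.length_cons] at hl1
        exact List.length_eq_zero_iff.mp (by omega)
      subst ht
      simp only [List.head?_cons, Option.some.injEq] at h1
      subst h1
      rw [cornerCount_singleton] at hcc
      rw [if_pos hcc.symm]
      simp
  · intro hl
    by_cases h0 : ℓ = 0
    · rw [if_pos h0] at hl
      have hleq : l = [((a : ℤ), (b : ℤ))] := hl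
      subst hleq
      subst h0
      refine ⟨⟨rfl, rfl, List.isChain_singleton _, ?_⟩, cornerCount_singleton _⟩
      intro p hp
      simp only [List.mem_singleton] at hp
      subst hp
      exact hab
    · rw [if_neg h0] at hl
      exact absurd hl (Set.notMem_empty l)

lemma Fset_triv {a b : ℤ} {ℓ : ℕ} (hab : a ≤ b) :
    Fset a b a b ℓ = Tset a b a b ℓ := by
  ext l
  constructor
  · exact fun h => h.1
  · intro h
    refine ⟨h, ?_⟩
    rw [Tset_triv hab] at h
    by_cases h0 : ℓ = 0
    · rw [if_pos h0] at h
      have hleq : l = [((a : ℤ), (b : ℤ))] := h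
      subst hleq
      simp
    · rw [if_neg h0] at h
      exact absurd h (Set.notMem_empty l)

lemma Tset_empty {a b c d : ℤ} {ℓ : ℕ}
    (h : c + d < a + b ∨ (c + d = a + b ∧ ¬(a = c ∧ b = d))) :
    Tset a b c d ℓ = ∅ := by
  ext l
  simp only [Set.mem_empty_iff_false, iff_false]
  rintro ⟨hP, _⟩
  have hlen := path_length hP
  have hne : l ≠ [] := by
    intro hnil
    rw [hnil] at hP
    simp [IsNEPathAbove] at hP
  have hpos : 1 ≤ l.length := List.length_pos_iff.mpr hne
  rcases h with h | ⟨h1, h2⟩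
  · omega
  · have hl1 : l.length = 1 := by omega
    obtain ⟨hh1, hh2, _, _⟩ := hP
    cases l with
    | nil => simp at hl1
    | cons x t =>
      have ht : t = [] := by
        simp only [List.length_cons] at hl1
        exact List.length_eq_zero_iff.mp (by omega)
      subst ht
      simp only [List.head?_cons, Option.some.injEq] at hh1
      simp only [List.getLast?_singleton, Option.some.injEq] at hh2
      rw [hh1] at hh2
      simp only [Prod.mk.injEq] at hh2
      exact h2 ⟨hh2.1, hh2.2⟩

lemma Fset_diag {a c d : ℤ} {ℓ : ℕ} (hne : ¬(a = c ∧ a = d)) :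
    Fset a a c d ℓ = ∅ := by
  ext l
  simp only [Set.mem_empty_iff_false, iff_false]
  rintro ⟨⟨⟨h1, h2, h3, h4⟩, h5⟩, h6⟩
  cases l with
  | nil => simp at h1
  | cons x t =>
    simp only [List.head?_cons, Option.some.injEq] at h1
    subst h1
    cases t with
    | nil =>
      simp only [List.getLast?_singleton, Option.some.injEq, Prod.mk.injEq] at h2
      exact hne ⟨h2.1, h2.2⟩
    | cons y t' =>
      have hstep : NEStep (a, a) y := (List.isChain_cons_cons.mp h3).1
      rcases hstep with h | h
      · have hy := h4 y (List.mem_cons_of_mem _ (List.mem_cons_self))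
        rw [h] at hy
        simp at hy
      · exact h6 (by simp [h])


lemma cT_neg_k {a b c d k : ℤ} (h : k < 0) : cT a b c d k = 0 := by
  have e1 : icc (d-b) k = 0 := icc_zero (Or.inr h)
  have e2 : icc (d-a-1) (k-1) = 0 := icc_zero (Or.inr (by omega))
  unfold cT; rw [e1, e2]; ring

lemma cons_inj (x : ℤ × ℤ) : Function.Injective (fun t : List (ℤ × ℤ) => x :: t) :=
  fun _ _ h => by simpa using h

lemma main_count (n : ℕ) : ∀ a b c d : ℤ, ∀ ℓ : ℕ, a ≤ b → c ≤ d → c + d - a - b ≤ (n : ℤ) →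
    (Tset a b c d ℓ).Finite ∧ ((Tset a b c d ℓ).ncard : ℤ) = cT a b c d (ℓ : ℤ) ∧
      ((Fset a b c d ℓ).ncard : ℤ) = cT a b c d (ℓ : ℤ) - cT a (b + 1) c d (ℓ : ℤ) := by
  induction n with
  | zero =>
    intro a b c d ℓ hab hcd hdist
    by_cases htr : a = c ∧ b = d
    · obtain ⟨rfl, rfl⟩ := htr
      have hT := Tset_triv (a := a) (b := b) (ℓ := ℓ) hab
      have hF := Fset_triv (a := a) (b := b) (ℓ := ℓ) hab
      have hcT := cT_triv (a := a) (b := b) (k := (ℓ:ℤ)) hab (Int.natCast_nonneg ℓ)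
      have hcT2 : cT a (b+1) a b (ℓ:ℤ) = 0 := cT_zero_b hab (by omega)
      rw [hF, hT, hcT, hcT2]
      by_cases h0 : ℓ = 0
      · subst h0
        rw [if_pos rfl, if_pos (by norm_num)]
        refine ⟨Set.finite_singleton _, ?_, ?_⟩ <;> simp
      · rw [if_neg h0, if_neg (by exact_mod_cast h0)]
        refine ⟨Set.finite_empty, ?_, ?_⟩ <;> simp
    · have hd0 : c + d ≤ a + b := by omega
      have hTe : Tset a b c d ℓ = ∅ := by
        rcases lt_or_eq_of_le hd0 with h | h
        · exact Tset_empty (Or.inl h)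
        · exact Tset_empty (Or.inr ⟨h, htr⟩)
      have hFe : Fset a b c d ℓ = ∅ :=
        Set.subset_empty_iff.mp (hTe ▸ Fset_subset a b c d ℓ)
      have hor : c < a ∨ d < b := by
        rcases not_and_or.mp htr with h | h <;> omega
      have hc1 : cT a b c d (ℓ:ℤ) = 0 := by
        rcases hor with h | h
        · exact cT_zero_a hab h
        · exact cT_zero_b hcd h
      have hor2 : c < a ∨ d < b + 1 := by omega
      have hc2 : cT a (b+1) c d (ℓ:ℤ) = 0 := by
        rcases hor2 with h | h
        · exact cT_zero_a (by omega) h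
        · exact cT_zero_b hcd h
      rw [hTe, hFe, hc1, hc2]
      refine ⟨Set.finite_empty, ?_, ?_⟩ <;> simp
  | succ n ih =>
    intro a b c d ℓ hab hcd hdist
    by_cases hsm : c + d - a - b ≤ (n : ℤ)
    · exact ih a b c d ℓ hab hcd hsm
    · have hdist' : c + d - a - b = (n : ℤ) + 1 := by push_cast at hdist; omega
      have hne : ¬(a = c ∧ b = d) := by rintro ⟨rfl, rfl⟩; omega
      have hNb := ih a (b+1) c d ℓ (by omega) hcd (by omega)
      have hNeq := Nset_eq (a := a) (b := b) (c := c) (d := d) (ℓ := ℓ) hab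
      have hNfin : (Nset a b c d ℓ).Finite := by rw [hNeq]; exact hNb.1.image _
      have hNcard : ((Nset a b c d ℓ).ncard : ℤ) = cT a (b+1) c d (ℓ:ℤ) := by
        rw [hNeq, Set.ncard_image_of_injective _ (cons_inj _)]
        exact hNb.2.1
      have hFkey : (Fset a b c d ℓ).Finite ∧
          ((Fset a b c d ℓ).ncard : ℤ) = cT a b c d (ℓ:ℤ) - cT a (b+1) c d (ℓ:ℤ) := by
        rcases eq_or_lt_of_le hab with hab' | hab'
        · subst hab'
          have hFe : Fset a a c d ℓ = ∅ := Fset_diag (by rintro ⟨rfl, rfl⟩; omega)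
          rw [hFe]
          refine ⟨Set.finite_empty, ?_⟩
          have hdd := cF_diag (a := a) (c := c) (d := d) (k := (ℓ:ℤ)) hcd
            (by rintro ⟨rfl, rfl⟩; omega) (Int.natCast_nonneg ℓ)
          simp only [Set.ncard_empty, Nat.cast_zero]
          linarith [hdd]
        · have hFd := Fset_eq_step (ℓ := ℓ) hab' hne
          have hA := ih (a+1) b c d ℓ (by omega) hcd (by omega)
          have hN' : (if ℓ = 0 then (∅ : Set (List (ℤ × ℤ))) else Nset (a+1) b c d (ℓ-1)).Finite ∧
              (((if ℓ = 0 then (∅ : Set (List (ℤ × ℤ))) else Nset (a+1) b c d (ℓ-1)).ncard : ℤ)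
                = cT (a+1) (b+1) c d ((ℓ:ℤ) - 1)) := by
            by_cases h0 : ℓ = 0
            · rw [if_pos h0]
              subst h0
              refine ⟨Set.finite_empty, ?_⟩
              rw [cT_neg_k (by norm_num)]
              simp
            · rw [if_neg h0]
              have hNeq2 := Nset_eq (a := a+1) (b := b) (c := c) (d := d) (ℓ := ℓ-1)
                (by omega)
              have hB := ih (a+1) (b+1) c d (ℓ-1) (by omega) hcd (by omega)
              rw [hNeq2]
              refine ⟨hB.1.image _, ?_⟩
              rw [Set.ncard_image_of_injective _ (cons_inj _), hB.2.1,
                show ((ℓ - 1 : ℕ) : ℤ) = (ℓ:ℤ) - 1 by omega]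
          have hdisj : Disjoint
              (if ℓ = 0 then (∅ : Set (List (ℤ × ℤ))) else Nset (a+1) b c d (ℓ-1))
              (Fset (a+1) b c d ℓ) := by
            by_cases h0 : ℓ = 0
            · rw [if_pos h0]
              exact Set.disjoint_left.mpr (fun x hx => absurd hx (Set.notMem_empty x))
            · rw [if_neg h0, Set.disjoint_left]
              rintro l ⟨_, hl1⟩ ⟨_, hl2⟩
              exact hl2 hl1
          have hN'fin := hN'.1
          have hF'fin : (Fset (a+1) b c d ℓ).Finite := hA.1.subset (Fset_subset _ _ _ _ _)
          have hFfin : (Fset a b c d ℓ).Finite := by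
            rw [hFd]; exact ((hN'fin.union hF'fin).image _)
          refine ⟨hFfin, ?_⟩
          rw [hFd, Set.ncard_image_of_injective _ (cons_inj _),
            Set.ncard_union_eq hdisj hN'fin hF'fin]
          push_cast
          rw [hN'.2, hA.2.2]
          have hrec := cF_rec (a := a) (b := b) (c := c) (d := d) (k := (ℓ:ℤ)) hab' hcd
            (fun h => hne ⟨h.1.symm, h.2.symm⟩) (Int.natCast_nonneg ℓ)
          linarith [hrec]
      have hTu := Tset_eq_union a b c d ℓ
      have hTfin : (Tset a b c d ℓ).Finite := by rw [hTu]; exact hFkey.1.union hNfin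
      refine ⟨hTfin, ?_, hFkey.2⟩
      rw [hTu, Set.ncard_union_eq (FN_disjoint a b c d ℓ) hFkey.1 hNfin]
      push_cast
      rw [hFkey.2, hNcard]
      ring

theorem stmt15 (a b c d : ℤ) (ℓ : ℕ) (hab : a ≤ b) (hcd : c ≤ d) :
    (Set.ncard {l : List (ℤ × ℤ) | IsNEPathAbove (a, b) (c, d) l ∧ cornerCount l = ℓ} : ℤ) =
      (intChoose (d - b) (ℓ : ℤ) : ℤ) * (intChoose (c - a) (ℓ : ℤ) : ℤ) -
        (intChoose (d - a - 1) ((ℓ : ℤ) - 1) : ℤ) * (intChoose (c - b + 1) ((ℓ : ℤ) + 1) : ℤ) := by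
  have h := main_count (c + d - a - b).toNat a b c d ℓ hab hcd (by omega)
  have h2 := h.2.1
  unfold cT icc at h2
  exact h2
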